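/- The number of lower ideals of [2] × K_{n-1} is (n+2)(2n+1), where K_{n-1} is the ordinal sum of an (n-1)-chain, a 2-element antichain, and an (n-1)-chain. -/
import Mathlib

/-- The poset `K_n = [n] ⊕ ([1] ⊔ [1]) ⊕ [n]`. -/
abbrev K (n : ℕ) : Type := Fin n ⊕ₗ ((Fin 1 ⊕ Fin 1) ⊕ₗ Fin n)

instance (n : ℕ) : Fintype (K n) :=
  inferInstanceAs (Fintype (Fin n ⊕ ((Fin 1 ⊕ Fin 1) ⊕ Fin n)))

def kb (m : ℕ) (i : Fin m) : K m := toLex (Sum.inl i)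
def ka (m : ℕ) (b : Bool) : K m := toLex (Sum.inr (toLex (Sum.inl (if b then Sum.inr 0 else Sum.inl 0))))
def kt (m : ℕ) (i : Fin m) : K m := toLex (Sum.inr (toLex (Sum.inr i)))

theorem K.cases' {m : ℕ} (x : K m) :
    (∃ i, x = kb m i) ∨ (∃ b, x = ka m b) ∨ (∃ i, x = kt m i) := by
  rcases x with i | y
  · exact Or.inl ⟨i, rfl⟩
  · rcases y with a | i
    · rcases a with a | a
      · exact Or.inr (Or.inl ⟨false, by rw [Fin.fin_one_eq_zero a]; rfl⟩)
      · exact Or.inr (Or.inl ⟨true, by rw [Fin.fin_one_eq_zero a]; rfl⟩)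
    · exact Or.inr (Or.inr ⟨i, rfl⟩)

variable {m : ℕ}

@[simp] theorem kb_le_kb {i j : Fin m} : kb m i ≤ kb m j ↔ i ≤ j := by
  simp [kb, Sum.Lex.inl_le_inl_iff]
@[simp] theorem kb_le_ka {i : Fin m} {b : Bool} : kb m i ≤ ka m b := Sum.Lex.inl_le_inr _ _
@[simp] theorem kb_le_kt {i j : Fin m} : kb m i ≤ kt m j := Sum.Lex.inl_le_inr _ _
@[simp] theorem ka_le_ka {b c : Bool} : ka m b ≤ ka m c ↔ b = c := by
  unfold ka
  rw [Sum.Lex.inr_le_inr_iff, Sum.Lex.inl_le_inl_iff]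
  cases b <;> cases c <;> simp
@[simp] theorem ka_le_kt {b : Bool} {i : Fin m} : ka m b ≤ kt m i := by
  unfold ka kt; rw [Sum.Lex.inr_le_inr_iff]; exact Sum.Lex.inl_le_inr _ _
@[simp] theorem kt_le_kt {i j : Fin m} : kt m i ≤ kt m j ↔ i ≤ j := by
  unfold kt; rw [Sum.Lex.inr_le_inr_iff, Sum.Lex.inr_le_inr_iff]
@[simp] theorem not_ka_le_kb {b : Bool} {i : Fin m} : ¬ ka m b ≤ kb m i := Sum.Lex.not_inr_le_inl
@[simp] theorem not_kt_le_kb {i j : Fin m} : ¬ kt m i ≤ kb m j := Sum.Lex.not_inr_le_inl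
@[simp] theorem not_kt_le_ka {i : Fin m} {b : Bool} : ¬ kt m i ≤ ka m b := by
  unfold ka kt; rw [Sum.Lex.inr_le_inr_iff]; exact Sum.Lex.not_inr_le_inl

def kr (m : ℕ) : K m → ℕ := fun x =>
  match ofLex x with
  | .inl i => (i : ℕ)
  | .inr y =>
    match ofLex y with
    | .inl (.inl _) => m
    | .inl (.inr _) => m + 1
    | .inr i => m + 3 + (i : ℕ)

@[simp] theorem kr_kb {i : Fin m} : kr m (kb m i) = (i : ℕ) := rfl
@[simp] theorem kr_ka {b : Bool} : kr m (ka m b) = if b then m + 1 else m := by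
  cases b <;> rfl
@[simp] theorem kr_kt {i : Fin m} : kr m (kt m i) = m + 3 + (i : ℕ) := rfl

def G (m a : ℕ) : Finset (K m) :=
  Finset.univ.filter (fun x => kr m x < a ∧ ¬(a = m + 2 ∧ kr m x = m))

theorem mem_G {a : ℕ} {x : K m} :
    x ∈ G m a ↔ kr m x < a ∧ ¬(a = m + 2 ∧ kr m x = m) := by
  simp [G]

theorem kr_mono {x y : K m} (h : y ≤ x) : kr m y ≤ kr m x := by
  rcases K.cases' x with ⟨i, rfl⟩ | ⟨b, rfl⟩ | ⟨i, rfl⟩ <;>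
    rcases K.cases' y with ⟨j, rfl⟩ | ⟨c, rfl⟩ | ⟨j, rfl⟩
  · rw [kb_le_kb, Fin.le_iff_val_le_val] at h; simpa using h
  · simp at h
  · simp at h
  · have := j.2; cases b <;> simp <;> omega
  · rw [ka_le_ka] at h; subst h; exact le_refl _
  · simp at h
  · have := j.2; simp; omega
  · cases c <;> simp <;> omega
  · rw [kt_le_kt, Fin.le_iff_val_le_val] at h; simp; omega

theorem kr_eq_m {y : K m} (h : kr m y = m) : y = ka m false := by
  rcases K.cases' y with ⟨j, rfl⟩ | ⟨c, rfl⟩ | ⟨j, rfl⟩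
  · have := j.2; simp at h; omega
  · cases c
    · rfl
    · simp at h
  · simp at h; omega

theorem G_lower (a : ℕ) : IsLowerSet (G m a : Set (K m)) := by
  intro x y hyx hx
  rw [Finset.mem_coe, mem_G] at *
  have h1 := kr_mono hyx
  refine ⟨by omega, ?_⟩
  rintro ⟨rfl, hy⟩
  have := kr_eq_m hy
  subst this
  rcases K.cases' x with ⟨i, rfl⟩ | ⟨b, rfl⟩ | ⟨i, rfl⟩
  · simp at hyx
  · have : b = false := by simpa using hyx
    subst this
    simp at hx
  · simp at hx
    omega

theorem kr_surj {t : ℕ} (h1 : t < 2 * m + 3) (h2 : t ≠ m + 2) : ∃ x : K m, kr m x = t := by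
  rcases Nat.lt_or_ge t m with h | h
  · exact ⟨kb m ⟨t, h⟩, rfl⟩
  · rcases Nat.lt_or_ge t (m + 2) with h' | h'
    · rcases Nat.eq_or_lt_of_le h with rfl | h''
      · exact ⟨ka m false, by simp⟩
      · exact ⟨ka m true, by simp; omega⟩
    · refine ⟨kt m ⟨t - (m + 3), by omega⟩, by simp; omega⟩

theorem G_subset_iff {a b : ℕ} (ha : a < 2 * m + 4) (hb : b < 2 * m + 4) :
    G m b ⊆ G m a ↔ (b ≤ a ∧ ¬(a = m + 2 ∧ b = m + 1)) := by
  constructor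
  · intro hsub
    by_contra h
    by_cases hc : a = m + 2
    · have hb' : b > m + 2 ∨ b = m + 1 := by omega
      have hx : ka m false ∈ G m b := by rw [mem_G]; simp; omega
      have := mem_G.mp (hsub hx)
      simp at this; omega
    · have hab : a < b := by omega
      by_cases hb3 : b = m + 3
      · have hx : ka m true ∈ G m b := by rw [mem_G]; simp; omega
        have := mem_G.mp (hsub hx)
        simp at this; omega
      · have e1 : b - 1 < 2 * m + 3 := by omega
        have e2 : b - 1 ≠ m + 2 := by omega
        obtain ⟨x, hx⟩ := kr_surj (m := m) e1 e2
        have hxb : x ∈ G m b := by rw [mem_G]; omega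
        have := mem_G.mp (hsub hxb)
        omega
  · rintro ⟨h1, h2⟩ x hx
    rw [mem_G] at *
    omega

@[simp] theorem kb_mem_G {a : ℕ} {i : Fin m} : kb m i ∈ G m a ↔ (i : ℕ) < a := by
  have := i.2; rw [mem_G]; simp; try omega

@[simp] theorem kaF_mem_G {a : ℕ} : ka m false ∈ G m a ↔ (m < a ∧ a ≠ m + 2) := by
  rw [mem_G]; simp; try omega

@[simp] theorem kaT_mem_G {a : ℕ} : ka m true ∈ G m a ↔ m + 1 < a := by
  rw [mem_G]; simp; try omega

@[simp] theorem kt_mem_G {a : ℕ} {i : Fin m} : kt m i ∈ G m a ↔ m + 3 + (i : ℕ) < a := by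
  rw [mem_G]; simp; try omega

theorem chain_prefix {μ : ℕ} {s : Finset (Fin μ)} (hs : ∀ ⦃i j : Fin μ⦄, i ≤ j → j ∈ s → i ∈ s)
    (i : Fin μ) : i ∈ s ↔ (i : ℕ) < s.card := by
  constructor
  · intro hi
    have h1 : Finset.Iic i ⊆ s := fun j hj => hs (Finset.mem_Iic.mp hj) hi
    have := Finset.card_le_card h1
    rw [Fin.card_Iic] at this; omega
  · intro hi
    by_contra hmem
    have h1 : s ⊆ Finset.Iio i := by
      intro j hj
      rw [Finset.mem_Iio]
      rcases lt_or_ge j i with h | h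
      · exact h
      · exact absurd (hs h hj) hmem
    have := Finset.card_le_card h1
    rw [Fin.card_Iio] at this; omega

theorem exists_G {A : Finset (K m)} (hA : IsLowerSet (A : Set (K m))) :
    ∃ a, a < 2 * m + 4 ∧ A = G m a := by
  classical
  by_cases hF : ka m false ∈ A <;> by_cases hT : ka m true ∈ A
  · -- both middles
    set s : Finset (Fin m) := Finset.univ.filter (fun i => kt m i ∈ A) with hsdef
    have hslow : ∀ ⦃i j : Fin m⦄, i ≤ j → j ∈ s → i ∈ s := by
      intro i j hij hj
      simp only [hsdef, Finset.mem_filter, Finset.mem_univ, true_and] at *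
      exact hA (kt_le_kt.mpr hij) hj
    have hk : s.card ≤ m := by
      have h2 := Finset.card_le_card (Finset.filter_subset (fun i => kt m i ∈ A) Finset.univ)
      simpa [hsdef] using h2
    refine ⟨m + 3 + s.card, by omega, ?_⟩
    ext x
    rcases K.cases' x with ⟨i, rfl⟩ | ⟨b, rfl⟩ | ⟨i, rfl⟩
    · exact iff_of_true (hA kb_le_ka hF) (kb_mem_G.mpr (by have := i.2; omega))
    · cases b
      · exact iff_of_true hF (kaF_mem_G.mpr (by omega))
      · exact iff_of_true hT (kaT_mem_G.mpr (by omega))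
    · have h1 : kt m i ∈ A ↔ (i : ℕ) < s.card := by
        rw [← chain_prefix hslow i]; simp [hsdef]
      rw [h1, kt_mem_G]; omega
  · -- only false
    refine ⟨m + 1, by omega, ?_⟩
    ext x
    rcases K.cases' x with ⟨i, rfl⟩ | ⟨b, rfl⟩ | ⟨i, rfl⟩
    · exact iff_of_true (hA kb_le_ka hF) (kb_mem_G.mpr (by have := i.2; omega))
    · cases b
      · exact iff_of_true hF (kaF_mem_G.mpr (by omega))
      · exact iff_of_false hT (by rw [kaT_mem_G]; omega)
    · exact iff_of_false (fun hx => hT (hA ka_le_kt hx)) (by rw [kt_mem_G]; omega)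
  · -- only true
    refine ⟨m + 2, by omega, ?_⟩
    ext x
    rcases K.cases' x with ⟨i, rfl⟩ | ⟨b, rfl⟩ | ⟨i, rfl⟩
    · exact iff_of_true (hA kb_le_ka hT) (kb_mem_G.mpr (by have := i.2; omega))
    · cases b
      · exact iff_of_false hF (by rw [kaF_mem_G]; omega)
      · exact iff_of_true hT (kaT_mem_G.mpr (by omega))
    · exact iff_of_false (fun hx => hF (hA ka_le_kt hx)) (by rw [kt_mem_G]; omega)
  · -- neither
    set s : Finset (Fin m) := Finset.univ.filter (fun i => kb m i ∈ A) with hsdef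
    have hslow : ∀ ⦃i j : Fin m⦄, i ≤ j → j ∈ s → i ∈ s := by
      intro i j hij hj
      simp only [hsdef, Finset.mem_filter, Finset.mem_univ, true_and] at *
      exact hA (kb_le_kb.mpr hij) hj
    have hk : s.card ≤ m := by
      have h2 := Finset.card_le_card (Finset.filter_subset (fun i => kb m i ∈ A) Finset.univ)
      simpa [hsdef] using h2
    refine ⟨s.card, by omega, ?_⟩
    ext x
    rcases K.cases' x with ⟨i, rfl⟩ | ⟨b, rfl⟩ | ⟨i, rfl⟩
    · have h1 : kb m i ∈ A ↔ (i : ℕ) < s.card := by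
        rw [← chain_prefix hslow i]; simp [hsdef]
      rw [h1, kb_mem_G]
    · cases b
      · exact iff_of_false hF (by rw [kaF_mem_G]; omega)
      · exact iff_of_false hT (by rw [kaT_mem_G]; omega)
    · exact iff_of_false (fun hx => hF (hA ka_le_kt hx)) (by rw [kt_mem_G]; omega)

theorem G_eq_inj {a b : ℕ} (ha : a < 2 * m + 4) (hb : b < 2 * m + 4)
    (h : G m a = G m b) : a = b := by
  have h1 := (G_subset_iff hb ha).mp h.le
  have h2 := (G_subset_iff ha hb).mp h.ge
  omega

theorem fin2 : ∀ j : Fin 2, j = 0 ∨ j = 1 := by decide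

instance instDecEqK (m : ℕ) : DecidableEq (K m) :=
  inferInstanceAs (DecidableEq (Fin m ⊕ ((Fin 1 ⊕ Fin 1) ⊕ Fin m)))

def e1 (m : ℕ) : {I : Finset (Fin 2 × K m) // IsLowerSet (I : Set (Fin 2 × K m))} ≃
    {p : Finset (K m) × Finset (K m) //
      IsLowerSet (p.1 : Set (K m)) ∧ IsLowerSet (p.2 : Set (K m)) ∧ p.2 ⊆ p.1} where
  toFun I := ⟨(Finset.univ.filter (fun x => ((0 : Fin 2), x) ∈ I.1),
               Finset.univ.filter (fun x => ((1 : Fin 2), x) ∈ I.1)), by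
    refine ⟨?_, ?_, ?_⟩
    · intro x y hyx hx
      simp only [Finset.coe_filter, Set.mem_setOf_eq, Finset.mem_univ, true_and] at *
      exact I.2 (Prod.mk_le_mk.mpr ⟨le_refl _, hyx⟩) hx
    · intro x y hyx hx
      simp only [Finset.coe_filter, Set.mem_setOf_eq, Finset.mem_univ, true_and] at *
      exact I.2 (Prod.mk_le_mk.mpr ⟨le_refl _, hyx⟩) hx
    · intro x hx
      simp only [Finset.mem_filter, Finset.mem_univ, true_and] at *
      exact I.2 (Prod.mk_le_mk.mpr ⟨show (0 : Fin 2) ≤ 1 by decide, le_refl x⟩) hx⟩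
  invFun p := ⟨Finset.univ.filter (fun q => if q.1 = 0 then q.2 ∈ p.1.1 else q.2 ∈ p.1.2), by
    obtain ⟨⟨A, B⟩, hA, hB, hBA⟩ := p
    intro a b hba ha
    obtain ⟨j, x⟩ := a
    obtain ⟨j', y⟩ := b
    rw [Prod.mk_le_mk] at hba
    obtain ⟨hj, hyx⟩ := hba
    simp only [Finset.coe_filter, Set.mem_setOf_eq, Finset.mem_univ, true_and] at *
    rcases fin2 j with rfl | rfl <;> rcases fin2 j' with rfl | rfl
    · simp only [if_pos rfl] at *
      exact hA hyx ha
    · exact absurd hj (by decide)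
    · simp only [if_pos rfl, if_neg (by decide : ¬(1 : Fin 2) = 0)] at *
      exact hA hyx (hBA ha)
    · simp only [if_neg (by decide : ¬(1 : Fin 2) = 0)] at *
      exact hB hyx ha⟩
  left_inv I := by
    apply Subtype.ext
    ext q
    obtain ⟨j, x⟩ := q
    rcases fin2 j with rfl | rfl
    · simp
    · simp [(by decide : ¬(1 : Fin 2) = 0)]
  right_inv p := by
    apply Subtype.ext
    obtain ⟨⟨A, B⟩, hA, hB, hBA⟩ := p
    have h1 : ∀ x : K m, x ∈ A ↔ ((0 : Fin 2), x) ∈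
        Finset.univ.filter (fun q : Fin 2 × K m => if q.1 = 0 then q.2 ∈ A else q.2 ∈ B) := by
      intro x; simp
    have h2 : ∀ x : K m, x ∈ B ↔ ((1 : Fin 2), x) ∈
        Finset.univ.filter (fun q : Fin 2 × K m => if q.1 = 0 then q.2 ∈ A else q.2 ∈ B) := by
      intro x; simp [(by decide : ¬(1 : Fin 2) = 0)]
    simp only [Prod.mk.injEq]
    constructor <;> ext x
    · rw [Finset.mem_filter]
      simp [← h1 x]
    · rw [Finset.mem_filter]
      simp [← h2 x]

def Pcond (m : ℕ) (q : ℕ × ℕ) : Prop :=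
  q.1 < 2 * m + 4 ∧ q.2 < 2 * m + 4 ∧ q.2 ≤ q.1 ∧ ¬(q.1 = m + 2 ∧ q.2 = m + 1)

noncomputable def e2 (m : ℕ) : {q : ℕ × ℕ // Pcond m q} ≃
    {p : Finset (K m) × Finset (K m) //
      IsLowerSet (p.1 : Set (K m)) ∧ IsLowerSet (p.2 : Set (K m)) ∧ p.2 ⊆ p.1} := by
  apply Equiv.ofBijective
    (f := fun q => ⟨(G m q.1.1, G m q.1.2),
      G_lower _, G_lower _,
      (G_subset_iff q.2.1 q.2.2.1).mpr ⟨q.2.2.2.1, q.2.2.2.2⟩⟩)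
  constructor
  · rintro ⟨⟨a, b⟩, h⟩ ⟨⟨a', b'⟩, h'⟩ heq
    simp only [Subtype.mk.injEq, Prod.mk.injEq] at heq
    apply Subtype.ext
    simp only [Prod.mk.injEq]
    exact ⟨G_eq_inj h.1 h'.1 heq.1, G_eq_inj h.2.1 h'.2.1 heq.2⟩
  · rintro ⟨⟨A, B⟩, hA, hB, hBA⟩
    obtain ⟨a, ha, rfl⟩ := exists_G hA
    obtain ⟨b, hb, rfl⟩ := exists_G hB
    have hc := (G_subset_iff ha hb).mp hBA
    exact ⟨⟨(a, b), ha, hb, hc.1, hc.2⟩, rfl⟩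

theorem count_S (m : ℕ) :
    (((Finset.range (2 * m + 4)) ×ˢ (Finset.range (2 * m + 4))).filter
      (fun q => q.2 ≤ q.1 ∧ ¬(q.1 = m + 2 ∧ q.2 = m + 1))).card = (m + 3) * (2 * m + 3) := by
  classical
  rw [Finset.card_filter, Finset.sum_product]
  have inner : ∀ a ∈ Finset.range (2 * m + 4),
      (∑ b ∈ Finset.range (2 * m + 4),
        if (b ≤ a ∧ ¬(a = m + 2 ∧ b = m + 1)) then 1 else 0) =
      if a = m + 2 then m + 2 else a + 1 := by
    intro a ha
    rw [Finset.mem_range] at ha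
    by_cases hc : a = m + 2
    · subst hc
      rw [if_pos rfl, ← Finset.card_filter]
      have : (Finset.range (2 * m + 4)).filter
          (fun b => b ≤ m + 2 ∧ ¬(m + 2 = m + 2 ∧ b = m + 1)) =
          (Finset.range (m + 3)).erase (m + 1) := by
        ext b
        simp only [Finset.mem_filter, Finset.mem_range, Finset.mem_erase,
          eq_self_iff_true, true_and]
        omega
      rw [this, Finset.card_erase_of_mem (by simp only [Finset.mem_range]; omega),
        Finset.card_range]
      omega
    · rw [if_neg hc, ← Finset.card_filter]
      have : (Finset.range (2 * m + 4)).filter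
          (fun b => b ≤ a ∧ ¬(a = m + 2 ∧ b = m + 1)) = Finset.range (a + 1) := by
        ext b
        simp only [Finset.mem_filter, Finset.mem_range]
        omega
      rw [this, Finset.card_range]
  rw [Finset.sum_congr rfl inner]
  have hmem : m + 2 ∈ Finset.range (2 * m + 4) := by simp; omega
  rw [← Finset.add_sum_erase _ _ hmem, if_pos rfl]
  have herase : (∑ a ∈ (Finset.range (2 * m + 4)).erase (m + 2),
      if a = m + 2 then m + 2 else a + 1) =
      ∑ a ∈ (Finset.range (2 * m + 4)).erase (m + 2), (a + 1) := by
    apply Finset.sum_congr rfl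
    intro a ha
    rw [if_neg (Finset.mem_erase.mp ha).1]
  rw [herase]
  have hT : (∑ a ∈ Finset.range (2 * m + 4), (a + 1)) =
      (m + 3) + ∑ a ∈ (Finset.range (2 * m + 4)).erase (m + 2), (a + 1) := by
    rw [← Finset.add_sum_erase _ _ hmem]
  have hT2 : (∑ a ∈ Finset.range (2 * m + 4), (a + 1)) =
      (∑ a ∈ Finset.range (2 * m + 4), a) + (2 * m + 4) := by
    rw [Finset.sum_add_distrib, Finset.sum_const, Finset.card_range, smul_eq_mul, mul_one]
  have hS0 : (∑ a ∈ Finset.range (2 * m + 4), a) = (m + 2) * (2 * m + 3) := by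
    apply Nat.eq_of_mul_eq_mul_right (show 0 < 2 by norm_num)
    rw [Finset.sum_range_id_mul_two]
    have h41 : 2 * m + 4 - 1 = 2 * m + 3 := by omega
    rw [h41]
    ring
  have key : (m + 3) * (2 * m + 3) = (m + 2) * (2 * m + 3) + (2 * m + 3) := by ring
  rw [hS0] at hT2
  generalize hq : (m + 2) * (2 * m + 3) = P at hT2 key
  generalize hr : (m + 3) * (2 * m + 3) = Q at key ⊢
  omega

/-- For `n ≥ 1`, the number of lower ideals of `[2] × K_{n-1}` is `(n+2)(2n+1)`. -/
theorem card_lowerIdeals_chain2_K (n : ℕ) (hn : 1 ≤ n) :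
    Nat.card {I : Finset (Fin 2 × K (n - 1)) //
        IsLowerSet (I : Set (Fin 2 × K (n - 1)))} = (n + 2) * (2 * n + 1) := by
  obtain ⟨M, rfl⟩ : ∃ M, n = M + 1 := ⟨n - 1, by omega⟩
  have hM : M + 1 - 1 = M := rfl
  rw [hM]
  have hiff : ∀ q : ℕ × ℕ, Pcond M q ↔ q ∈
      (((Finset.range (2 * M + 4)) ×ˢ (Finset.range (2 * M + 4))).filter
        (fun q => q.2 ≤ q.1 ∧ ¬(q.1 = M + 2 ∧ q.2 = M + 1))) := by
    intro q
    simp only [Pcond, Finset.mem_filter, Finset.mem_product, Finset.mem_range]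
    tauto
  calc Nat.card {I : Finset (Fin 2 × K M) // IsLowerSet (I : Set (Fin 2 × K M))}
      = Nat.card {p : Finset (K M) × Finset (K M) //
          IsLowerSet (p.1 : Set (K M)) ∧ IsLowerSet (p.2 : Set (K M)) ∧ p.2 ⊆ p.1} :=
        Nat.card_congr (e1 M)
    _ = Nat.card {q : ℕ × ℕ // Pcond M q} := (Nat.card_congr (e2 M)).symm
    _ = Nat.card (((Finset.range (2 * M + 4)) ×ˢ (Finset.range (2 * M + 4))).filter
          (fun q => q.2 ≤ q.1 ∧ ¬(q.1 = M + 2 ∧ q.2 = M + 1))) :=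
        Nat.card_congr (Equiv.subtypeEquivRight hiff)
    _ = (M + 3) * (2 * M + 3) := by
        rw [Nat.card_eq_finsetCard]
        exact count_S M
    _ = (M + 1 + 2) * (2 * (M + 1) + 1) := by ring
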